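/- Let μ be a Borel probability measure on Cantor space 𝒞 = ℕ → Bool and suppose there is a finite word v (a list of Booleans) such that the μ-measure of the cylinder set v∘𝒞 of all sequences extending v is not a dyadic rational, i.e., not of the form k/2^n for natural numbers k, n. Then there is no total continuous function F : 𝒞 → 𝒞 such that the pushforward of the fair coin measure γ under F equals μ. -/
import Mathlib


open MeasureTheory Set

/-- `IsFairCoin γ` says that `γ` is the fair-coin measure on Cantor space `ℕ → Bool`:
the (unique) Borel probability measure assigning measure `2⁻ⁿ` to each cylinder set
determined by fixing the first `n` coordinates. -/
def IsFairCoin (γ : Measure (ℕ → Bool)) : Prop :=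
  IsProbabilityMeasure γ ∧
    ∀ (n : ℕ) (w : Fin n → Bool),
      γ {x : ℕ → Bool | ∀ i : Fin n, x (i : ℕ) = w i} = (1 / 2 : ENNReal) ^ n

/-- The cylinder set of all infinite binary sequences extending the finite word `v`. -/
def cylinder (v : List Bool) : Set (ℕ → Bool) :=
  {x : ℕ → Bool | ∀ i : Fin v.length, x (i : ℕ) = v.get i}

lemma measurableSet_level (n : ℕ) (w : Fin n → Bool) :
    MeasurableSet {x : ℕ → Bool | ∀ i : Fin n, x (i : ℕ) = w i} := by
  have : {x : ℕ → Bool | ∀ i : Fin n, x (i : ℕ) = w i}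
      = ⋂ i : Fin n, (fun x : ℕ → Bool => x (i : ℕ)) ⁻¹' {w i} := by
    ext x; simp [Set.mem_iInter]
  rw [this]
  exact MeasurableSet.iInter fun i => (measurable_pi_apply _) (measurableSet_singleton _)

lemma measurableSet_cylinder (v : List Bool) : MeasurableSet (cylinder v) :=
  measurableSet_level v.length (fun i => v.get i)

lemma isClopen_cylinder (v : List Bool) : IsClopen (cylinder v) := by
  have h : cylinder v = ⋂ i : Fin v.length, (fun x : ℕ → Bool => x (i : ℕ)) ⁻¹' {v.get i} := by
    ext x
    simp only [_root_.cylinder, Set.mem_setOf_eq, Set.mem_iInter, Set.mem_preimage,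
      Set.mem_singleton_iff]
  constructor
  · rw [h]
    exact isClosed_iInter fun i => (isClosed_discrete _).preimage (continuous_apply _)
  · rw [h]
    exact isOpen_iInter_of_finite fun i => (isOpen_discrete _).preimage (continuous_apply _)

/-- Level-n cylinder around a point, as a `PiNat.cylinder`. -/
lemma level_eq_piNat (n : ℕ) (x : ℕ → Bool) :
    {y : ℕ → Bool | ∀ i : Fin n, y (i : ℕ) = x (i : ℕ)} = PiNat.cylinder x n := by
  ext y
  simp only [Set.mem_setOf_eq, PiNat.mem_cylinder_iff]
  constructor
  · intro h i hi; exact h ⟨i, hi⟩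
  · intro h i; exact h i i.isLt

/-- A clopen set in Cantor space is a union of cylinders of a fixed finite depth. -/
lemma exists_depth {K : Set (ℕ → Bool)} (hO : IsOpen K) (hC : IsClosed K) :
    ∃ N : ℕ, ∀ x ∈ K, PiNat.cylinder x N ⊆ K := by
  have hcpt : IsCompact K := hC.isCompact
  -- for each x in K pick a depth
  have hx : ∀ x ∈ K, ∃ n : ℕ, PiNat.cylinder x n ⊆ K := by
    intro x hxK
    obtain ⟨s, ⟨y, m, rfl⟩, hxs, hsK⟩ :=
      (PiNat.isTopologicalBasis_cylinders (fun _ : ℕ => Bool)).exists_subset_of_mem_open hxK hO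
    exact ⟨m, by rwa [PiNat.mem_cylinder_iff_eq.1 hxs]⟩
  classical
  choose! n hn using hx
  have hcover : K ⊆ ⋃ x ∈ K, PiNat.cylinder x (n x) := fun x hxK =>
    Set.mem_biUnion hxK (PiNat.self_mem_cylinder _ _)
  obtain ⟨t, htb, htfin, htcover⟩ := hcpt.elim_finite_subcover_image
    (fun x _ => PiNat.isOpen_cylinder (fun _ : ℕ => Bool) x (n x)) hcover
  obtain ⟨t', rfl⟩ := htfin.exists_finset_coe
  refine ⟨t'.sup n, fun x hxK => ?_⟩
  obtain ⟨y, hyt, hxy⟩ := Set.mem_iUnion₂.1 (htcover hxK)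
  have hyK : y ∈ K := htb hyt
  have hle : n y ≤ t'.sup n := Finset.le_sup (by exact_mod_cast hyt)
  calc PiNat.cylinder x (t'.sup n) ⊆ PiNat.cylinder x (n y) := PiNat.cylinder_anti x hle
    _ = PiNat.cylinder y (n y) := PiNat.mem_cylinder_iff_eq.1 hxy
    _ ⊆ K := hn y hyK

/-- If some cylinder set has non-dyadic measure under a Borel probability measure `μ` on
Cantor space, then no total continuous function pushes the fair coin measure `γ`
forward to `μ`. -/
theorem stmt1 (γ μ : Measure (ℕ → Bool)) (hγ : IsFairCoin γ) [IsProbabilityMeasure μ]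
    (v : List Bool) (hv : ¬ ∃ k n : ℕ, μ (cylinder v) = (k : ENNReal) / 2 ^ n) :
    ¬ ∃ F : (ℕ → Bool) → (ℕ → Bool), Continuous F ∧ γ.map F = μ := by
  rintro ⟨F, hF, hmap⟩
  classical
  set K : Set (ℕ → Bool) := F ⁻¹' cylinder v with hK
  have hclopen := isClopen_cylinder v
  have hKO : IsOpen K := hclopen.2.preimage hF
  have hKC : IsClosed K := hclopen.1.preimage hF
  obtain ⟨N, hN⟩ := exists_depth hKO hKC
  -- level N cylinders
  set S : (Fin N → Bool) → Set (ℕ → Bool) :=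
    fun w => {x : ℕ → Bool | ∀ i : Fin N, x (i : ℕ) = w i} with hS
  set A : Finset (Fin N → Bool) := Finset.univ.filter (fun w => S w ⊆ K) with hA
  have hKeq : K = ⋃ w ∈ A, S w := by
    ext x
    constructor
    · intro hxK
      have hw : (fun i : Fin N => x (i : ℕ)) ∈ A := by
        simp only [hA, Finset.mem_filter, Finset.mem_univ, true_and]
        have hs : S (fun i : Fin N => x (i : ℕ)) = PiNat.cylinder x N := level_eq_piNat N x
        rw [hs]
        exact hN x hxK
      exact Set.mem_biUnion hw (fun i => rfl)
    · intro hx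
      obtain ⟨w, hw, hxw⟩ := Set.mem_iUnion₂.1 hx
      exact (Finset.mem_filter.1 hw).2 hxw
  have hSdisj : (A : Set (Fin N → Bool)).PairwiseDisjoint S := by
    intro w _ w' _ hww'
    refine Set.disjoint_left.2 fun x hxw hxw' => hww' ?_
    funext i
    rw [← hxw i, ← hxw' i]
  have hSmeas : ∀ w : Fin N → Bool, MeasurableSet (S w) := fun w => measurableSet_level N w
  have hγK : γ K = (A.card : ENNReal) * (1 / 2 : ENNReal) ^ N := by
    rw [hKeq, measure_biUnion_finset hSdisj (fun w _ => hSmeas w)]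
    rw [Finset.sum_congr rfl (fun w _ => hγ.2 N w)]
    simp [Finset.sum_const, nsmul_eq_mul]
  have hμ : μ (cylinder v) = γ K := by
    rw [← hmap, Measure.map_apply hF.measurable (measurableSet_cylinder v)]
  refine hv ⟨A.card, N, ?_⟩
  rw [hμ, hγK, one_div, ← ENNReal.inv_pow, ← div_eq_mul_inv]
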